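/- Define a partial order on core imputations of the assignment game by (u,v) ≤ (u',v') iff u_i ≥ u'_i for all i ∈ U. Then for any two core imputations (u,v), (u',v'), the pair (max(u,u'), min(v,v')) (componentwise) is again a core imputation. -/

import Mathlib

open scoped Classical

/-- `M` is a matching in the bipartite graph with edge set `E`. -/
def IsMatching {U V : Type*} (E M : Finset (U × V)) : Prop :=
  M ⊆ E ∧ (∀ e ∈ M, ∀ e' ∈ M, e.1 = e'.1 → e = e') ∧
    (∀ e ∈ M, ∀ e' ∈ M, e.2 = e'.2 → e = e')

/-- Total weight of a set of edges. -/
def matchWeight {U V : Type*} (w : U × V → ℚ) (M : Finset (U × V)) : ℚ :=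
  ∑ e ∈ M, w e

/-- Maximum weight of a matching in `(E, w)`. -/
noncomputable def maxWeight {U V : Type*} [DecidableEq U] [DecidableEq V]
    (E : Finset (U × V)) (w : U × V → ℚ) : ℚ :=
  ((E.powerset).filter (fun M => IsMatching E M)).sup'
    ⟨∅, by simp [IsMatching]⟩ (matchWeight w)

/-- `M` is a maximum weight matching. -/
def IsMaxMatching {U V : Type*} [DecidableEq U] [DecidableEq V]
    (E : Finset (U × V)) (w : U × V → ℚ) (M : Finset (U × V)) : Prop :=
  IsMatching E M ∧ matchWeight w M = maxWeight E w

/-- Core imputations of the assignment game (Shapley–Shubik characterization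
as optimal dual solutions). -/
def InCore {U V : Type*} [Fintype U] [Fintype V] [DecidableEq U] [DecidableEq V]
    (E : Finset (U × V)) (w : U × V → ℚ) (u : U → ℚ) (v : V → ℚ) : Prop :=
  (∀ i, 0 ≤ u i) ∧ (∀ j, 0 ≤ v j) ∧ (∀ e ∈ E, w e ≤ u e.1 + v e.2) ∧
    (∑ i, u i) + (∑ j, v j) = maxWeight E w

/-- A vertex (from either side) is matched in `M`. -/
def MatchedIn {U V : Type*} (M : Finset (U × V)) : U ⊕ V → Prop
  | Sum.inl i => ∃ j, (i, j) ∈ M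
  | Sum.inr j => ∃ i, (i, j) ∈ M

/-- A vertex is essential if it is matched in every maximum weight matching. -/
def EssentialVertex {U V : Type*} [DecidableEq U] [DecidableEq V]
    (E : Finset (U × V)) (w : U × V → ℚ) (q : U ⊕ V) : Prop :=
  ∀ M, IsMaxMatching E w M → MatchedIn M q

/-- Weak duality: any matching weight is bounded by any feasible dual value. -/
lemma weak_duality {U V : Type*} [Fintype U] [Fintype V]
    [DecidableEq U] [DecidableEq V]
    (E : Finset (U × V)) (w : U × V → ℚ) (M : Finset (U × V))
    (hM : IsMatching E M) (u : U → ℚ) (v : V → ℚ)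
    (hu : ∀ i, 0 ≤ u i) (hv : ∀ j, 0 ≤ v j)
    (hf : ∀ e ∈ E, w e ≤ u e.1 + v e.2) :
    matchWeight w M ≤ (∑ i, u i) + (∑ j, v j) := by
  have h1 : matchWeight w M ≤ ∑ e ∈ M, (u e.1 + v e.2) :=
    Finset.sum_le_sum (fun e he => hf e (hM.1 he))
  have h2 : ∑ e ∈ M, (u e.1 + v e.2)
      = (∑ i ∈ M.image Prod.fst, u i) + (∑ j ∈ M.image Prod.snd, v j) := by
    rw [Finset.sum_add_distrib,
      Finset.sum_image (fun e he e' he' hee' => hM.2.1 e he e' he' hee'),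
      Finset.sum_image (fun e he e' he' hee' => hM.2.2 e he e' he' hee')]
  have h3 : ∑ i ∈ M.image Prod.fst, u i ≤ ∑ i, u i :=
    Finset.sum_le_sum_of_subset_of_nonneg (Finset.subset_univ _)
      (fun i _ _ => hu i)
  have h4 : ∑ j ∈ M.image Prod.snd, v j ≤ ∑ j, v j :=
    Finset.sum_le_sum_of_subset_of_nonneg (Finset.subset_univ _)
      (fun j _ _ => hv j)
  calc matchWeight w M ≤ _ := h1
    _ = _ := h2
    _ ≤ _ := add_le_add h3 h4

/-- Existence of a maximum weight matching. -/
lemma exists_max_matching {U V : Type*} [DecidableEq U] [DecidableEq V]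
    (E : Finset (U × V)) (w : U × V → ℚ) :
    ∃ M, IsMaxMatching E w M := by
  obtain ⟨M, hM, hval⟩ := Finset.exists_mem_eq_sup'
    (⟨∅, by simp [IsMatching]⟩ :
      ((E.powerset).filter (fun M => IsMatching E M)).Nonempty)
    (matchWeight w)
  exact ⟨M, (Finset.mem_filter.mp hM).2, hval.symm⟩

/-- Complementary slackness. -/
lemma comp_slack {U V : Type*} [Fintype U] [Fintype V]
    [DecidableEq U] [DecidableEq V]
    (E : Finset (U × V)) (w : U × V → ℚ) (u : U → ℚ) (v : V → ℚ)
    (h : InCore E w u v) (M : Finset (U × V)) (hM : IsMaxMatching E w M) :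
    (∀ e ∈ M, u e.1 + v e.2 = w e) ∧
    (∀ i, i ∉ M.image Prod.fst → u i = 0) ∧
    (∀ j, j ∉ M.image Prod.snd → v j = 0) := by
  obtain ⟨hu, hv, hf, hsum⟩ := h
  have key : matchWeight w M = (∑ i, u i) + (∑ j, v j) := by
    rw [hM.2, hsum]
  have h2 : ∑ e ∈ M, (u e.1 + v e.2)
      = (∑ i ∈ M.image Prod.fst, u i) + (∑ j ∈ M.image Prod.snd, v j) := by
    rw [Finset.sum_add_distrib,
      Finset.sum_image (fun e he e' he' hee' => hM.1.2.1 e he e' he' hee'),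
      Finset.sum_image (fun e he e' he' hee' => hM.1.2.2 e he e' he' hee')]
  have h1 : matchWeight w M ≤ ∑ e ∈ M, (u e.1 + v e.2) :=
    Finset.sum_le_sum (fun e he => hf e (hM.1.1 he))
  have h3 : ∑ i ∈ M.image Prod.fst, u i ≤ ∑ i, u i :=
    Finset.sum_le_sum_of_subset_of_nonneg (Finset.subset_univ _)
      (fun i _ _ => hu i)
  have h4 : ∑ j ∈ M.image Prod.snd, v j ≤ ∑ j, v j :=
    Finset.sum_le_sum_of_subset_of_nonneg (Finset.subset_univ _)
      (fun j _ _ => hv j)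
  -- All the inequalities must be equalities.
  have hB : ∑ e ∈ M, (u e.1 + v e.2) = matchWeight w M := by
    have : ∑ e ∈ M, (u e.1 + v e.2) ≤ (∑ i, u i) + (∑ j, v j) := by
      rw [h2]; exact add_le_add h3 h4
    linarith [h1, key, this]
  have hedge : ∀ e ∈ M, u e.1 + v e.2 = w e := by
    intro e he
    have := (Finset.sum_eq_sum_iff_of_le
      (fun e he => hf e (hM.1.1 he))).mp hB.symm e he
    linarith [this]
  constructor
  · exact hedge
  have h3' : ∑ i ∈ M.image Prod.fst, u i = ∑ i, u i := by
    have h4' := h4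
    have : (∑ i ∈ M.image Prod.fst, u i) + (∑ j ∈ M.image Prod.snd, v j)
        = (∑ i, u i) + (∑ j, v j) := by rw [← h2, hB, key]
    linarith
  have h4' : ∑ j ∈ M.image Prod.snd, v j = ∑ j, v j := by
    have : (∑ i ∈ M.image Prod.fst, u i) + (∑ j ∈ M.image Prod.snd, v j)
        = (∑ i, u i) + (∑ j, v j) := by rw [← h2, hB, key]
    linarith
  constructor
  · intro i hi
    have hz : ∑ i ∈ (M.image Prod.fst)ᶜ, u i = 0 := by
      have := Finset.sum_add_sum_compl (M.image Prod.fst) u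
      linarith
    have := (Finset.sum_eq_zero_iff_of_nonneg (fun i _ => hu i)).mp hz
    exact this i (Finset.mem_compl.mpr hi)
  · intro j hj
    have hz : ∑ j ∈ (M.image Prod.snd)ᶜ, v j = 0 := by
      have := Finset.sum_add_sum_compl (M.image Prod.snd) v
      linarith
    have := (Finset.sum_eq_zero_iff_of_nonneg (fun j _ => hv j)).mp hz
    exact this j (Finset.mem_compl.mpr hj)

/-- The lattice meet of two core imputations (componentwise max on the `U` side
and min on the `V` side) is again a core imputation. -/
theorem core_meet {U V : Type*} [Fintype U] [Fintype V]
    [DecidableEq U] [DecidableEq V]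
    (E : Finset (U × V)) (w : U × V → ℚ)
    (u : U → ℚ) (v : V → ℚ) (u' : U → ℚ) (v' : V → ℚ)
    (h : InCore E w u v) (h' : InCore E w u' v') :
    InCore E w (fun i => max (u i) (u' i)) (fun j => min (v j) (v' j)) := by
  obtain ⟨hu, hv, hf, hsum⟩ := h
  obtain ⟨hu', hv', hf', hsum'⟩ := h'
  have hunn : ∀ i, 0 ≤ max (u i) (u' i) := fun i => le_max_of_le_left (hu i)
  have hvnn : ∀ j, 0 ≤ min (v j) (v' j) := fun j => le_min (hv j) (hv' j)
  have hfeas : ∀ e ∈ E, w e ≤ max (u e.1) (u' e.1) + min (v e.2) (v' e.2) := by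
    intro e he
    rcases le_total (v e.2) (v' e.2) with hle | hle
    · rw [min_eq_left hle]
      exact le_trans (hf e he) (add_le_add (le_max_left _ _) le_rfl)
    · rw [min_eq_right hle]
      exact le_trans (hf' e he) (add_le_add (le_max_right _ _) le_rfl)
  refine ⟨hunn, hvnn, hfeas, le_antisymm ?_ ?_⟩
  · -- ≤ maxWeight: use complementary slackness with a max matching
    obtain ⟨M, hM⟩ := exists_max_matching E w
    obtain ⟨he1, hi1, hj1⟩ := comp_slack E w u v ⟨hu, hv, hf, hsum⟩ M hM
    obtain ⟨he2, hi2, hj2⟩ := comp_slack E w u' v' ⟨hu', hv', hf', hsum'⟩ M hM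
    have hU : ∑ i, max (u i) (u' i) = ∑ i ∈ M.image Prod.fst, max (u i) (u' i) := by
      rw [← Finset.sum_add_sum_compl (M.image Prod.fst) (fun i => max (u i) (u' i))]
      have : ∑ i ∈ (M.image Prod.fst)ᶜ, max (u i) (u' i) = 0 := by
        apply Finset.sum_eq_zero
        intro i hi
        rw [hi1 i (Finset.mem_compl.mp hi), hi2 i (Finset.mem_compl.mp hi)]
        simp
      rw [this, add_zero]
    have hV : ∑ j, min (v j) (v' j) = ∑ j ∈ M.image Prod.snd, min (v j) (v' j) := by
      rw [← Finset.sum_add_sum_compl (M.image Prod.snd) (fun j => min (v j) (v' j))]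
      have : ∑ j ∈ (M.image Prod.snd)ᶜ, min (v j) (v' j) = 0 := by
        apply Finset.sum_eq_zero
        intro j hj
        rw [hj1 j (Finset.mem_compl.mp hj), hj2 j (Finset.mem_compl.mp hj)]
        simp
      rw [this, add_zero]
    have hU' : ∑ i ∈ M.image Prod.fst, max (u i) (u' i)
        = ∑ e ∈ M, max (u e.1) (u' e.1) :=
      Finset.sum_image (fun e he e' he' hee' => hM.1.2.1 e he e' he' hee')
    have hV' : ∑ j ∈ M.image Prod.snd, min (v j) (v' j)
        = ∑ e ∈ M, min (v e.2) (v' e.2) :=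
      Finset.sum_image (fun e he e' he' hee' => hM.1.2.2 e he e' he' hee')
    have hedge : ∀ e ∈ M, max (u e.1) (u' e.1) + min (v e.2) (v' e.2) ≤ w e := by
      intro e he
      rcases le_total (u e.1) (u' e.1) with hle | hle
      · rw [max_eq_right hle]
        have : min (v e.2) (v' e.2) ≤ v' e.2 := min_le_right _ _
        linarith [he2 e he]
      · rw [max_eq_left hle]
        have : min (v e.2) (v' e.2) ≤ v e.2 := min_le_left _ _
        linarith [he1 e he]
    calc (∑ i, max (u i) (u' i)) + (∑ j, min (v j) (v' j))
        = (∑ e ∈ M, max (u e.1) (u' e.1)) + (∑ e ∈ M, min (v e.2) (v' e.2)) := by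
          rw [hU, hV, hU', hV']
      _ = ∑ e ∈ M, (max (u e.1) (u' e.1) + min (v e.2) (v' e.2)) := by
          rw [Finset.sum_add_distrib]
      _ ≤ ∑ e ∈ M, w e := Finset.sum_le_sum hedge
      _ = maxWeight E w := hM.2
  · -- maxWeight ≤ sum: weak duality applied to all matchings
    apply Finset.sup'_le
    intro M hMmem
    exact weak_duality E w M (Finset.mem_filter.mp hMmem).2 _ _ hunn hvnn hfeas
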